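/- Let n ≥ 8 and k ∈ [4..n/2-1], and suppose the population P consists of exactly one solution for each function value (a, 2k+n-a), a ∈ [2k..n], so |P| = n-2k+1. Then the probability that one GSEMO iteration produces 0^n or 1^n satisfies ∑_{i=k}^{n-k} (1/(n-2k+1))·( n^{-i}(1-1/n)^{n-i} + n^{-(n-i)}(1-1/n)^{i} ) ≤ ((n-1)/(n-2))·(2/((n-2k+1)·n^k))·(1-1/n)^{n-k}. -/

import Mathlib

theorem full_population_extremal_probability (n k : ℕ) (hn : 8 ≤ n) (hk4 : 4 ≤ k)
    (hk : k ≤ n / 2 - 1) :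
    ∑ i ∈ Finset.Icc k (n - k),
        (1 / ((n : ℝ) - 2 * k + 1)) *
          ((1 / (n : ℝ)) ^ i * (1 - 1 / (n : ℝ)) ^ (n - i) +
            (1 / (n : ℝ)) ^ (n - i) * (1 - 1 / (n : ℝ)) ^ i) ≤
      (((n : ℝ) - 1) / ((n : ℝ) - 2)) * (2 / (((n : ℝ) - 2 * k + 1) * (n : ℝ) ^ k)) *
        (1 - 1 / (n : ℝ)) ^ (n - k) := by
  have h2k : 2 * k + 2 ≤ n := by omega
  have hnR : (8 : ℝ) ≤ (n : ℝ) := by exact_mod_cast hn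
  have hn0 : (0 : ℝ) < n := by linarith
  set x : ℝ := 1 / n with hx
  set y : ℝ := 1 - 1 / n with hy
  have hx0 : 0 < x := by positivity
  have hy0 : 0 < y := by
    rw [hy]
    have : (1 : ℝ) / n ≤ 1 / 8 := by
      apply one_div_le_one_div_of_le <;> linarith
    linarith
  set r : ℝ := x / y with hr
  have hr0 : 0 ≤ r := by positivity
  have hn8' : (1 : ℝ) / n ≤ 1 / 8 := by
    apply one_div_le_one_div_of_le <;> linarith
  have hxy : x < y := by
    rw [hx, hy]; linarith
  have hr1 : r < 1 := by
    rw [hr, div_lt_one hy0]; exact hxy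
  set c : ℝ := 1 / ((n : ℝ) - 2 * k + 1) with hc
  have hden : (0 : ℝ) < (n : ℝ) - 2 * k + 1 := by
    have : (2 * k + 2 : ℝ) ≤ n := by exact_mod_cast h2k
    push_cast at this ⊢
    linarith
  have hc0 : 0 < c := by positivity
  have prod_eq : ∀ a b : ℕ, k ≤ a → a + b = n →
      x ^ a * y ^ b = x ^ k * y ^ (n - k) * r ^ (a - k) := by
    intro a b hka hab
    have e1 : x ^ a = x ^ k * x ^ (a - k) := by
      rw [← pow_add]; congr 1; omega
    have e2 : y ^ (n - k) = y ^ b * y ^ (a - k) := by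
      rw [← pow_add]; congr 1; omega
    have e3 : r ^ (a - k) = x ^ (a - k) / y ^ (a - k) := by
      rw [hr, div_pow]
    rw [e1, e2, e3]
    have hyk : (y : ℝ) ^ (a - k) ≠ 0 := by positivity
    field_simp
  have key : ∀ i ∈ Finset.Icc k (n - k),
      c * (x ^ i * y ^ (n - i) + x ^ (n - i) * y ^ i)
        = c * (x ^ k * y ^ (n - k)) * (r ^ (i - k) + r ^ (n - k - i)) := by
    intro i hi
    rw [Finset.mem_Icc] at hi
    have h1 : x ^ i * y ^ (n - i) = x ^ k * y ^ (n - k) * r ^ (i - k) :=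
      prod_eq i (n - i) hi.1 (by omega)
    have h2 : x ^ (n - i) * y ^ i = x ^ k * y ^ (n - k) * r ^ (n - k - i) := by
      have := prod_eq (n - i) i (by omega) (by omega)
      rw [this]; congr 2; omega
    rw [h1, h2]; ring
  rw [Finset.sum_congr rfl key, ← Finset.mul_sum]
  have hsum : ∑ i ∈ Finset.Icc k (n - k), (r ^ (i - k) + r ^ (n - k - i))
      = 2 * ∑ j ∈ Finset.range (n - 2 * k + 1), r ^ j := by
    rw [Finset.sum_add_distrib]
    have hcard : n - k + 1 - k = n - 2 * k + 1 := by omega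
    have e1 : ∑ i ∈ Finset.Icc k (n - k), r ^ (i - k)
        = ∑ j ∈ Finset.range (n - 2 * k + 1), r ^ j := by
      rw [← Finset.Ico_add_one_right_eq_Icc, Finset.sum_Ico_eq_sum_range,
        show n - k + 1 - k = n - 2 * k + 1 from by omega]
      apply Finset.sum_congr rfl
      intro j hj; congr 1; omega
    have e2 : ∑ i ∈ Finset.Icc k (n - k), r ^ (n - k - i)
        = ∑ j ∈ Finset.range (n - 2 * k + 1), r ^ j := by
      rw [← Finset.Ico_add_one_right_eq_Icc, Finset.sum_Ico_eq_sum_range,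
        show n - k + 1 - k = n - 2 * k + 1 from by omega]
      rw [← Finset.sum_range_reflect]
      apply Finset.sum_congr rfl
      intro j hj
      rw [Finset.mem_range] at hj
      congr 1; omega
    rw [e1, e2]; ring
  rw [hsum]
  have hgeo : ∑ j ∈ Finset.range (n - 2 * k + 1), r ^ j ≤ 1 / (1 - r) := by
    rw [geom_sum_eq (ne_of_lt hr1)]
    have h1r : 0 < 1 - r := by linarith
    have : (r ^ (n - 2 * k + 1) - 1) / (r - 1) = (1 - r ^ (n - 2 * k + 1)) / (1 - r) := by
      rw [div_eq_div_iff (by linarith) (by linarith)]; ring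
    rw [this]
    gcongr
    have : (0 : ℝ) ≤ r ^ (n - 2 * k + 1) := by positivity
    linarith
  have hpre : 0 ≤ c * (x ^ k * y ^ (n - k)) := by positivity
  have step : c * (x ^ k * y ^ (n - k)) * (2 * ∑ j ∈ Finset.range (n - 2 * k + 1), r ^ j)
      ≤ c * (x ^ k * y ^ (n - k)) * (2 * (1 / (1 - r))) := by
    apply mul_le_mul_of_nonneg_left _ hpre
    linarith [hgeo]
  refine step.trans_eq ?_
  have hrval : r = 1 / ((n : ℝ) - 1) := by
    rw [hr, hx, hy]
    field_simp
  have hn1 : (n : ℝ) - 1 ≠ 0 := by linarith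
  have hn2 : (n : ℝ) - 2 ≠ 0 := by linarith
  have h1r : 1 - r = ((n : ℝ) - 2) / ((n : ℝ) - 1) := by
    rw [hrval, eq_div_iff hn1]
    field_simp
    ring
  have hxk : x ^ k = 1 / (n : ℝ) ^ k := by rw [hx, div_pow, one_pow]
  have hnk : ((n : ℝ)) ^ k ≠ 0 := by positivity
  have hdne : ((n : ℝ) - 2 * k + 1) ≠ 0 := ne_of_gt hden
  rw [h1r, hc, hxk]
  field_simp
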